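/- (Unary penalty Hamiltonian spectrum) Let n ≥ 3 and define the (n−1)-qubit operator H^{pen}_{unary} = −Σ_{j=1}^{n−2} Z_{j+1} Z_j + Z_1 − Z_{n−1}. Then every unary codeword state |u_j⟩ (j = 1,…,n) is an eigenvector of H^{pen}_{unary} with eigenvalue −(n−2); this is the least eigenvalue of H^{pen}_{unary}; the eigenspace for eigenvalue −(n−2) is exactly span{|u_1⟩,…,|u_n⟩}; and every other eigenvalue of H^{pen}_{unary} is at least −(n−2) + 4 (i.e., the spectral gap between the ground and first excited energy levels equals 4). -/

import Mathlib

open Matrix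

/-- The single-qubit Pauli `X` matrix `[[0,1],[1,0]]`, with basis indexed by `Bool`
(`false = |0⟩`, `true = |1⟩`). -/
def pauliX : Matrix Bool Bool ℂ := fun s t => if s = t then 0 else 1

/-- The single-qubit Pauli `Y` matrix `[[0,-i],[i,0]]`. -/
def pauliY : Matrix Bool Bool ℂ :=
  fun s t => if s = t then 0 else if s then Complex.I else -Complex.I

/-- The single-qubit Pauli `Z` matrix `[[1,0],[0,-1]]`. -/
def pauliZ : Matrix Bool Bool ℂ := fun s t => if s = t then (if s then -1 else 1) else 0

/-- The single-qubit number operator `n̂ = (I - Z)/2`. -/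
noncomputable def numOp : Matrix Bool Bool ℂ := (2⁻¹ : ℂ) • (1 - pauliZ)

/-- The `m`-fold tensor (Kronecker) product `f 0 ⊗ f 1 ⊗ ⋯ ⊗ f (m-1)` of single-qubit
operators, as a matrix on `(ℂ²)^{⊗ m}` whose computational basis is indexed by bitstrings
`Fin m → Bool`. -/
def tensorOp {m : ℕ} (f : Fin m → Matrix Bool Bool ℂ) :
    Matrix (Fin m → Bool) (Fin m → Bool) ℂ :=
  fun s t => ∏ i, f i (s i) (t i)

/-- The single-qubit operator `M` acting on qubit `j` (0-indexed), tensored with the identity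
on all other qubits. -/
def siteOp {m : ℕ} (M : Matrix Bool Bool ℂ) (j : Fin m) :
    Matrix (Fin m → Bool) (Fin m → Bool) ℂ :=
  tensorOp fun i => if i = j then M else 1

/-- The computational basis vector labeled by the bitstring `w`. -/
def basisVec {m : ℕ} (w : Fin m → Bool) : (Fin m → Bool) → ℂ := fun s => if s = w then 1 else 0
/-- The unary codeword `u_j` on `n-1` qubits: for `j : Fin n` (representing the 1-indexed
integer `j+1`), the lowest `j` bits are `1` and the rest are `0`. -/
def unaryWord (n : ℕ) (j : Fin n) : Fin (n - 1) → Bool := fun i => decide ((i : ℕ) < (j : ℕ))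

/-- The unary penalty Hamiltonian
`H^{pen}_{unary} = -Σ_{j=1}^{n-2} Z_{j+1} Z_j + Z_1 - Z_{n-1}` on `n-1` qubits. -/
noncomputable def unaryPen (n : ℕ) (hn : 3 ≤ n) :
    Matrix (Fin (n - 1) → Bool) (Fin (n - 1) → Bool) ℂ :=
  -(∑ j : Fin (n - 2),
      siteOp pauliZ (⟨(j : ℕ) + 1, by have := j.isLt; omega⟩ : Fin (n - 1)) *
        siteOp pauliZ ⟨(j : ℕ), by have := j.isLt; omega⟩) +
    siteOp pauliZ (⟨0, by omega⟩ : Fin (n - 1)) -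
    siteOp pauliZ (⟨n - 2, by omega⟩ : Fin (n - 1))

section Aux

def zC (b : Bool) : ℂ := if b then -1 else 1
def zI (b : Bool) : ℤ := if b then -1 else 1

lemma zC_cast (b : Bool) : zC b = ((zI b : ℤ) : ℂ) := by cases b <;> simp [zC, zI]

/-- Extended bit string: `true` at position 0, `s (k-1)` for `1 ≤ k ≤ n-1`, `false` above. -/
def bext (n : ℕ) (s : Fin (n - 1) → Bool) (k : ℕ) : Bool :=
  if h : 1 ≤ k ∧ k ≤ n - 1 then s ⟨k - 1, by omega⟩ else decide (k = 0)

/-- number of domain walls -/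
def dCount (n : ℕ) (s : Fin (n - 1) → Bool) : ℕ :=
  ((Finset.range n).filter fun k => bext n s k ≠ bext n s (k + 1)).card

def Eint (n : ℕ) (s : Fin (n - 1) → Bool) : ℤ := 2 * dCount n s - n

lemma s_bext {n : ℕ} (s : Fin (n - 1) → Bool) (k : ℕ) (h : k < n - 1) :
    s ⟨k, h⟩ = bext n s (k + 1) := by
  rw [bext, dif_pos ⟨by omega, by omega⟩]
  congr 1

lemma bext_zero {n : ℕ} (hn : 3 ≤ n) (s : Fin (n - 1) → Bool) : bext n s 0 = true := by
  rw [bext, dif_neg (by omega)]; simp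

lemma bext_ge {n : ℕ} (hn : 3 ≤ n) (s : Fin (n - 1) → Bool) {k : ℕ} (hk : n ≤ k) :
    bext n s k = false := by
  rw [bext, dif_neg (by omega)]
  simp; omega

/-- tensor product of diagonal matrices is diagonal -/
lemma tensorOp_diagonal {m : ℕ} (g : Fin m → Bool → ℂ) :
    tensorOp (fun i => Matrix.diagonal (g i)) = Matrix.diagonal fun s => ∏ i, g i (s i) := by
  ext s t
  by_cases h : s = t
  · subst h; simp [tensorOp, Matrix.diagonal_apply_eq]
  · obtain ⟨i, hi⟩ := Function.ne_iff.mp h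
    rw [Matrix.diagonal_apply_ne _ h]
    exact Finset.prod_eq_zero (Finset.mem_univ i) (Matrix.diagonal_apply_ne _ hi)

lemma pauliZ_diag : pauliZ = Matrix.diagonal zC := by
  ext a b
  by_cases h : a = b
  · subst h; simp [pauliZ, zC, Matrix.diagonal_apply_eq]
  · simp [pauliZ, h, Matrix.diagonal_apply_ne _ h]

lemma siteOp_pauliZ {m : ℕ} (j : Fin m) :
    siteOp pauliZ j = Matrix.diagonal fun s => zC (s j) := by
  rw [siteOp]
  have h1 : (fun i : Fin m => if i = j then pauliZ else 1) =
      fun i : Fin m => Matrix.diagonal (fun b => if i = j then zC b else 1) := by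
    funext i
    split_ifs with h
    · rw [pauliZ_diag]
    · rw [← Matrix.diagonal_one]
  rw [h1, tensorOp_diagonal]
  have h2 : (fun s : Fin m → Bool => ∏ i, (fun b => if i = j then zC b else 1) (s i)) =
      fun s => zC (s j) := by
    funext s
    rw [show (∏ i : Fin m, if i = j then zC (s i) else 1) =
        if j ∈ Finset.univ then zC (s j) else 1 from
      Finset.prod_ite_eq' Finset.univ j (fun i => zC (s i))]
    simp
  rw [h2]

end Aux
section Aux2

lemma key (n : ℕ) (hn : 3 ≤ n) (s : Fin (n - 1) → Bool) :
    -(∑ k ∈ Finset.range (n - 2), zI (bext n s (k + 1 + 1)) * zI (bext n s (k + 1))) +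
        zI (bext n s (0 + 1)) - zI (bext n s (n - 2 + 1)) = Eint n s := by
  obtain ⟨N, rfl⟩ : ∃ N, n = N + 3 := ⟨n - 3, by omega⟩
  have h3 : (3 : ℕ) ≤ N + 3 := by omega
  set f : ℕ → Bool := bext (N + 3) s with hf
  set w : ℕ → ℤ := fun k => if f k ≠ f (k + 1) then 1 else -1 with hw
  have hmid : ∀ k : ℕ, w (k + 1) = -(zI (f (k + 1 + 1)) * zI (f (k + 1))) := by
    intro k
    rw [hw]; simp only
    cases h1 : f (k + 1) <;> cases h2 : f (k + 1 + 1) <;> simp [zI, h1, h2]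
  have h0 : w 0 = zI (f (0 + 1)) := by
    rw [hw]; simp only
    rw [show f 0 = true from bext_zero h3 s]
    cases h1 : f (0 + 1) <;> simp [zI, h1]
  have hlast : w (N + 2) = -zI (f (N + 2)) := by
    rw [hw]; simp only
    rw [show f (N + 2 + 1) = false from bext_ge h3 s (by omega)]
    cases h1 : f (N + 2) <;> simp [zI, h1]
  have peel : ∑ k ∈ Finset.range (N + 3), w k
      = ∑ k ∈ Finset.range (N + 1), w (k + 1) + w 0 + w (N + 2) := by
    rw [Finset.sum_range_succ, Finset.sum_range_succ']
  have hmidsum : ∑ k ∈ Finset.range (N + 1), w (k + 1)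
      = -∑ k ∈ Finset.range (N + 1), zI (f (k + 1 + 1)) * zI (f (k + 1)) := by
    rw [← Finset.sum_neg_distrib]
    exact Finset.sum_congr rfl fun k _ => hmid k
  have hd : dCount (N + 3) s = ((Finset.range (N + 3)).filter fun k => f k ≠ f (k + 1)).card := by
    rw [dCount]
  have hsum : ∑ k ∈ Finset.range (N + 3), w k = 2 * (dCount (N + 3) s : ℤ) - (N + 3 : ℕ) := by
    rw [hw, Finset.sum_ite, Finset.sum_const, Finset.sum_const]
    have hc := Finset.card_filter_add_card_filter_not
      (s := Finset.range (N + 3)) (p := fun k => f k ≠ f (k + 1))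
    rw [Finset.card_range] at hc
    rw [hd]
    simp only [nsmul_eq_mul, mul_one, mul_neg_one]
    push_cast
    omega
  have hE : Eint (N + 3) s = 2 * (dCount (N + 3) s : ℤ) - (N + 3 : ℕ) := by
    rw [Eint]
  show -(∑ k ∈ Finset.range (N + 1), zI (f (k + 1 + 1)) * zI (f (k + 1))) +
      zI (f (0 + 1)) - zI (f (N + 1 + 1)) = Eint (N + 3) s
  rw [hE]
  have := peel
  rw [hsum, hmidsum, h0, hlast] at this
  linarith [this]

end Aux2
section Aux3

lemma diag_sum {ι : Type*} (t : Finset ι) {m : Type*} [DecidableEq m] (g : ι → m → ℂ) :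
    ∑ j ∈ t, Matrix.diagonal (g j) = Matrix.diagonal (∑ j ∈ t, g j) :=
  (map_sum (Matrix.diagonalAddMonoidHom m ℂ) g t).symm

lemma pen_diag (n : ℕ) (hn : 3 ≤ n) :
    unaryPen n hn = Matrix.diagonal fun s => ((Eint n s : ℤ) : ℂ) := by
  rw [unaryPen]
  simp only [siteOp_pauliZ, Matrix.diagonal_mul_diagonal]
  rw [diag_sum]
  ext s t
  by_cases hst : s = t
  · subst hst
    simp only [Matrix.add_apply, Matrix.sub_apply, Matrix.neg_apply,
      Matrix.diagonal_apply_eq, Finset.sum_apply]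
    simp only [s_bext]
    rw [Fin.sum_univ_eq_sum_range
      (fun k => zC (bext n s (k + 1 + 1)) * zC (bext n s (k + 1))) (n - 2)]
    rw [← key n hn s]
    simp only [zC_cast]
    push_cast
    ring
  · simp [Matrix.diagonal_apply_ne _ hst]

end Aux3
section Aux4

lemma chain_const (f : ℕ → Bool) (a b : ℕ) (hab : a ≤ b)
    (h : ∀ k, a ≤ k → k < b → f k = f (k + 1)) : f a = f b := by
  induction b, hab using Nat.le_induction with
  | base => rfl
  | succ b hb ih =>
      rw [ih fun k hk hk' => h k hk (by omega), h b hb (by omega)]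

lemma parity (f : ℕ → Bool) (N : ℕ) :
    (f 0 = f N) ↔ Even ((Finset.range N).filter fun k => f k ≠ f (k + 1)).card := by
  induction N with
  | zero => simp
  | succ N ih =>
      rw [Finset.range_add_one, Finset.filter_insert]
      by_cases h : f N = f (N + 1)
      · rw [if_neg (by simp [h])]
        rw [← ih, h]
      · rw [if_pos h, Finset.card_insert_of_notMem (fun hmem => by
          exact absurd (Finset.mem_range.mp (Finset.mem_of_mem_filter _ hmem)) (lt_irrefl N))]
        rw [Nat.even_add_one, ← ih]
        cases h0 : f 0 <;> cases hN : f N <;> cases hN1 : f (N + 1) <;> simp_all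

lemma dCount_odd (n : ℕ) (hn : 3 ≤ n) (s : Fin (n - 1) → Bool) : Odd (dCount n s) := by
  rw [← Nat.not_even_iff_odd, dCount]
  intro hev
  have := (parity (bext n s) n).mpr hev
  rw [bext_zero hn s, bext_ge hn s (le_refl n)] at this
  exact Bool.true_eq_false ▸ this
  
end Aux4
section Aux5

lemma bext_unary (n : ℕ) (hn : 3 ≤ n) (j : Fin n) (k : ℕ) :
    bext n (unaryWord n j) k = decide (k ≤ (j : ℕ)) := by
  have hj := j.isLt
  rw [bext]
  split_ifs with h
  · rw [unaryWord]
    simp only [decide_eq_decide]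
    omega
  · simp only [decide_eq_decide]
    omega

lemma dCount_unary (n : ℕ) (hn : 3 ≤ n) (j : Fin n) : dCount n (unaryWord n j) = 1 := by
  have hj := j.isLt
  rw [dCount]
  rw [show ((Finset.range n).filter fun k =>
      bext n (unaryWord n j) k ≠ bext n (unaryWord n j) (k + 1)) = {(j : ℕ)} from ?_]
  · exact Finset.card_singleton _
  · ext k
    simp only [Finset.mem_filter, Finset.mem_range, Finset.mem_singleton,
      bext_unary n hn j, ne_eq, decide_eq_decide]
    omega

lemma unary_of_dCount_one (n : ℕ) (hn : 3 ≤ n) (s : Fin (n - 1) → Bool)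
    (hd : dCount n s = 1) : ∃ j : Fin n, s = unaryWord n j := by
  rw [dCount] at hd
  obtain ⟨k₀, hk₀⟩ := Finset.card_eq_one.mp hd
  have hk₀mem : k₀ ∈ (Finset.range n).filter fun k => bext n s k ≠ bext n s (k + 1) := by
    rw [hk₀]; exact Finset.mem_singleton_self k₀
  have hk₀n : k₀ < n := Finset.mem_range.mp (Finset.mem_of_mem_filter _ hk₀mem)
  have hnoflip : ∀ k, k < n → k ≠ k₀ → bext n s k = bext n s (k + 1) := by
    intro k hk hne
    by_contra hne'
    have : k ∈ (Finset.range n).filter fun k => bext n s k ≠ bext n s (k + 1) :=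
      Finset.mem_filter.mpr ⟨Finset.mem_range.mpr hk, hne'⟩
    rw [hk₀, Finset.mem_singleton] at this
    exact hne this
  refine ⟨⟨k₀, hk₀n⟩, ?_⟩
  funext i
  have hi := i.isLt
  have hs : s i = bext n s ((i : ℕ) + 1) := by
    rw [← s_bext s (i : ℕ) hi]
  rw [hs, unaryWord]
  by_cases hcase : (i : ℕ) < k₀
  · have h1 : bext n s 0 = bext n s ((i : ℕ) + 1) :=
      chain_const _ 0 ((i : ℕ) + 1) (by omega)
        (fun k hk hk' => hnoflip k (by omega) (by omega))
    rw [← h1, bext_zero hn s]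
    simp [hcase]
  · push_neg at hcase
    have h1 : bext n s ((i : ℕ) + 1) = bext n s n :=
      chain_const _ ((i : ℕ) + 1) n (by omega)
        (fun k hk hk' => hnoflip k hk' (by omega))
    rw [h1, bext_ge hn s (le_refl n)]
    simp [show ¬((i : ℕ) < k₀) from by omega]

end Aux5
section Aux6

/-- the first-excited-state word `0100⋯0`. -/
def exWord (n : ℕ) : Fin (n - 1) → Bool := fun i => decide ((i : ℕ) = 1)

lemma bext_exWord (n : ℕ) (hn : 3 ≤ n) (k : ℕ) :
    bext n (exWord n) k = decide (k = 0 ∨ k = 2) := by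
  rw [bext]
  split_ifs with h
  · rw [exWord]
    simp only [decide_eq_decide]
    omega
  · simp only [decide_eq_decide]
    omega

lemma dCount_exWord (n : ℕ) (hn : 3 ≤ n) : dCount n (exWord n) = 3 := by
  rw [dCount]
  rw [show ((Finset.range n).filter fun k =>
      bext n (exWord n) k ≠ bext n (exWord n) (k + 1)) = {0, 1, 2} from ?_]
  · rfl
  · ext k
    simp only [Finset.mem_filter, Finset.mem_range, Finset.mem_insert, Finset.mem_singleton,
      bext_exWord n hn, ne_eq, decide_eq_decide]
    omega

lemma unaryWord_inj (n : ℕ) (hn : 3 ≤ n) : Function.Injective (unaryWord n) := by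
  intro a b hab
  by_contra hne
  have hne' : (a : ℕ) ≠ (b : ℕ) := fun h => hne (Fin.ext h)
  rcases Nat.lt_or_ge (a : ℕ) (b : ℕ) with h | h
  · have hb := b.isLt
    have := congrFun hab ⟨(a : ℕ), by omega⟩
    simp only [unaryWord, decide_eq_decide] at this
    omega
  · have ha := a.isLt
    have hlt : (b : ℕ) < (a : ℕ) := by omega
    have := congrFun hab ⟨(b : ℕ), by omega⟩
    simp only [unaryWord, decide_eq_decide] at this
    omega

lemma mulVec_diag_basis {m : ℕ} (E : (Fin m → Bool) → ℂ) (w : Fin m → Bool) :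
    (Matrix.diagonal E).mulVec (basisVec w) = E w • basisVec w := by
  funext s
  rw [Matrix.mulVec_diagonal, Pi.smul_apply, smul_eq_mul]
  by_cases h : s = w
  · subst h; rfl
  · simp [basisVec, h]

end Aux6
/-- **Spectrum of the unary penalty Hamiltonian.** For `n ≥ 3`:
every unary codeword state is an eigenvector with eigenvalue `-(n-2)`; every eigenvalue is
either `-(n-2)` or real and at least `-(n-2)+4` (in particular `-(n-2)` is the least
eigenvalue); the `-(n-2)`-eigenspace is exactly the span of the unary codeword states; and
`-(n-2)+4` is attained, so the spectral gap equals `4`. -/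
theorem unary_penalty_spectrum (n : ℕ) (hn : 3 ≤ n) :
    (∀ j : Fin n,
        (unaryPen n hn).mulVec (basisVec (unaryWord n j)) =
          (-((n : ℂ) - 2)) • basisVec (unaryWord n j)) ∧
      (∀ μ : ℂ,
        (∃ v : (Fin (n - 1) → Bool) → ℂ, v ≠ 0 ∧ (unaryPen n hn).mulVec v = μ • v) →
          μ = -((n : ℂ) - 2) ∨ ∃ r : ℝ, μ = (r : ℂ) ∧ -((n : ℝ) - 2) + 4 ≤ r) ∧
      ({v : (Fin (n - 1) → Bool) → ℂ | (unaryPen n hn).mulVec v = (-((n : ℂ) - 2)) • v} =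
        (Submodule.span ℂ (Set.range fun j : Fin n => basisVec (unaryWord n j)) : Set _)) ∧
      (∃ v : (Fin (n - 1) → Bool) → ℂ, v ≠ 0 ∧
        (unaryPen n hn).mulVec v = (-((n : ℂ) - 2) + 4) • v) := by
  have hdiag := pen_diag n hn
  have hmul : ∀ (v : (Fin (n - 1) → Bool) → ℂ) (s : Fin (n - 1) → Bool),
      (unaryPen n hn).mulVec v s = ((Eint n s : ℤ) : ℂ) * v s := by
    intro v s
    rw [hdiag, Matrix.mulVec_diagonal]
  have hd13 : ∀ s, dCount n s = 1 ∨ 3 ≤ dCount n s := by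
    intro s
    obtain ⟨t, ht⟩ := dCount_odd n hn s
    omega
  have part1 : ∀ j : Fin n,
      (unaryPen n hn).mulVec (basisVec (unaryWord n j)) =
        (-((n : ℂ) - 2)) • basisVec (unaryWord n j) := by
    intro j
    rw [hdiag, mulVec_diag_basis]
    congr 1
    rw [Eint, dCount_unary n hn j]
    push_cast
    ring
  refine ⟨part1, ?_, ?_, ?_⟩
  · -- part 2
    rintro μ ⟨v, hv0, hv⟩
    obtain ⟨s, hs⟩ := Function.ne_iff.mp hv0
    have hs' : v s ≠ 0 := hs
    have h1 := congrFun hv s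
    rw [hmul v s, Pi.smul_apply, smul_eq_mul] at h1
    have h2 : ((Eint n s : ℤ) : ℂ) = μ := mul_right_cancel₀ hs' h1
    rcases hd13 s with h | h
    · left
      rw [← h2, Eint, h]
      push_cast
      ring
    · right
      refine ⟨((Eint n s : ℤ) : ℝ), by rw [← h2]; push_cast; ring, ?_⟩
      have h6 : (6 : ℤ) - n ≤ Eint n s := by rw [Eint]; omega
      have : (((6 : ℤ) - n : ℤ) : ℝ) ≤ ((Eint n s : ℤ) : ℝ) := Int.cast_le.mpr h6
      push_cast at this ⊢
      linarith
  · -- part 3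
    ext v
    simp only [Set.mem_setOf_eq, SetLike.mem_coe]
    constructor
    · intro hv
      have hz : ∀ s, (¬ ∃ j : Fin n, s = unaryWord n j) → v s = 0 := by
        intro s hsu
        have h1 := congrFun hv s
        rw [hmul v s, Pi.smul_apply, smul_eq_mul] at h1
        by_contra hvs
        have heq : ((Eint n s : ℤ) : ℂ) = -((n : ℂ) - 2) := mul_right_cancel₀ hvs h1
        rcases hd13 s with h | h
        · exact hsu (unary_of_dCount_one n hn s h)
        · have hint : (Eint n s : ℤ) = 2 - n := by
            have : ((Eint n s : ℤ) : ℂ) = (((2 : ℤ) - n : ℤ) : ℂ) := by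
              rw [heq]; push_cast; ring
            exact_mod_cast this
          rw [Eint] at hint
          omega
      have hrep : v = ∑ j : Fin n, v (unaryWord n j) • basisVec (unaryWord n j) := by
        funext s
        rw [Finset.sum_apply]
        by_cases hsu : ∃ j : Fin n, s = unaryWord n j
        · obtain ⟨j₀, rfl⟩ := hsu
          rw [Finset.sum_eq_single j₀]
          · simp [basisVec]
          · intro j _ hne
            have hne' : unaryWord n j₀ ≠ unaryWord n j :=
              fun h => hne (unaryWord_inj n hn h).symm
            simp [basisVec, hne']
          · intro h
            exact absurd (Finset.mem_univ j₀) h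
        · rw [hz s hsu]
          symm
          apply Finset.sum_eq_zero
          intro j _
          have : s ≠ unaryWord n j := fun h => hsu ⟨j, h⟩
          simp [basisVec, this]
      rw [hrep]
      exact Submodule.sum_mem _ fun j _ =>
        Submodule.smul_mem _ _ (Submodule.subset_span ⟨j, rfl⟩)
    · intro hv
      let W : Submodule ℂ ((Fin (n - 1) → Bool) → ℂ) :=
        { carrier := {v | (unaryPen n hn).mulVec v = (-((n : ℂ) - 2)) • v}
          add_mem' := by
            intro a b ha hb
            simp only [Set.mem_setOf_eq] at *
            rw [Matrix.mulVec_add, ha, hb, smul_add]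
          zero_mem' := by simp only [Set.mem_setOf_eq, Matrix.mulVec_zero, smul_zero]
          smul_mem' := by
            intro c x hx
            simp only [Set.mem_setOf_eq] at *
            rw [Matrix.mulVec_smul, hx, smul_comm] }
      have hle : Submodule.span ℂ (Set.range fun j : Fin n => basisVec (unaryWord n j)) ≤ W :=
        Submodule.span_le.mpr (by rintro _ ⟨j, rfl⟩; exact part1 j)
      exact hle hv
  · -- part 4
    refine ⟨basisVec (exWord n), ?_, ?_⟩
    · intro h
      have := congrFun h (exWord n)
      simp [basisVec] at this
    · rw [hdiag, mulVec_diag_basis]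
      congr 1
      rw [Eint, dCount_exWord n hn]
      push_cast
      ring
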